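/- Define the Hamilton–Jacobi polynomials Q_n ∈ ℚ[X₀,…,X_n] by Q₀ = 1 and the recursion Q_n = Σ_{k=1}^{n} Σ_{s₁+⋯+s_{2k}=n−k} a_k (D(2s₁−1)Q_{s₁})⋯(D(2s_{2k}−1)Q_{s_{2k}}), where a_k = C(1/2,k) and D(α)T = X₀·Σ_j X_{j+1} ∂T/∂X_j − α·X₁·T. Then for every n ≥ 0, Q_n is homogeneous of degree 2n with respect to the grading deg(X_k) = 1 for all k, and simultaneously homogeneous of degree 2n with respect to the grading wdeg(X_k) = k. -/

import Mathlib

open MvPolynomial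

/-- The derivation `T ↦ T' = Σ_j X_{j+1} ∂T/∂X_j` on `ℚ[X₀, X₁, …]`. -/
noncomputable def primeDeriv (T : MvPolynomial ℕ ℚ) : MvPolynomial ℕ ℚ :=
  ∑ j ∈ T.vars, X (j + 1) * pderiv j T

/-- The operator `D(α)T = X₀·T' − α·X₁·T`. -/
noncomputable def Dop (α : ℚ) (T : MvPolynomial ℕ ℚ) : MvPolynomial ℕ ℚ :=
  X 0 * primeDeriv T - C α * (X 1 * T)

/-- The generalized binomial coefficient `a_k = C(1/2, k)`. -/
noncomputable def genBinom (k : ℕ) : ℚ :=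
  (∏ i ∈ Finset.range k, ((1 : ℚ) / 2 - (i : ℚ))) / (Nat.factorial k : ℚ)

lemma weight_single (w : ℕ → ℕ) (s : ℕ) : Finsupp.weight w (Finsupp.single s 1) = w s := by
  simp [Finsupp.weight_apply, Finsupp.sum_single_index]

lemma key (w : ℕ → ℕ) (e : ℕ) (hw : ∀ j, w (j + 1) = w j + e) {φ : MvPolynomial ℕ ℚ} {n : ℕ}
    (hφ : φ.IsWeightedHomogeneous w n) (j : ℕ) :
    (X (j + 1) * pderiv j φ : MvPolynomial ℕ ℚ).IsWeightedHomogeneous w (n + e) := by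
  conv_lhs => rw [← φ.support_sum_monomial_coeff]
  rw [map_sum, Finset.mul_sum]
  apply IsWeightedHomogeneous.sum
  intro d hd
  rw [pderiv_monomial]
  rw [X, monomial_mul, one_mul]
  rcases eq_or_ne (d j) 0 with hdj | hdj
  · rw [hdj]; simp only [Nat.cast_zero, mul_zero, monomial_zero]
    exact isWeightedHomogeneous_zero ℚ w _
  apply isWeightedHomogeneous_monomial
  have hdn : Finsupp.weight w d = n := hφ (by simpa using hd)
  have hsub : (d - Finsupp.single j 1) + Finsupp.single j 1 = d := by
    ext i
    simp only [Finsupp.add_apply, Finsupp.tsub_apply, Finsupp.single_apply]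
    rcases eq_or_ne j i with rfl | h
    · simp; omega
    · simp [h]
  have h2 : Finsupp.weight w (d - Finsupp.single j 1) + w j = n := by
    rw [← weight_single w j, ← map_add, hsub, hdn]
  rw [map_add, weight_single, hw j]
  omega

lemma Dop_homog (w : ℕ → ℕ) (e : ℕ) (hw : ∀ j, w (j + 1) = w j + e) (h01 : w 0 + e = 1)
    {φ : MvPolynomial ℕ ℚ} {n : ℕ} (hφ : φ.IsWeightedHomogeneous w n) (α : ℚ) :
    (Dop α φ).IsWeightedHomogeneous w (n + 1) := by
  rw [← mem_weightedHomogeneousSubmodule]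
  apply sub_mem
  · rw [mem_weightedHomogeneousSubmodule]
    have : n + 1 = w 0 + (n + e) := by omega
    rw [this]
    exact (isWeightedHomogeneous_X ℚ w 0).mul
      (IsWeightedHomogeneous.sum _ _ _ (fun j _ => key w e hw hφ j))
  · rw [mem_weightedHomogeneousSubmodule]
    have : n + 1 = 0 + (w 1 + n) := by have h0 : w 1 = w 0 + e := hw 0; omega
    rw [this]
    exact (isWeightedHomogeneous_C w α).mul ((isWeightedHomogeneous_X ℚ w 1).mul hφ)

/-- The Hamilton–Jacobi polynomials `Q_n` are bihomogeneous of bidegree `(2n, 2n)`: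
homogeneous of degree `2n` for `deg X_k = 1` and of weighted degree `2n` for `wdeg X_k = k`. -/
theorem stmt10 (Q : ℕ → MvPolynomial ℕ ℚ) (hQ0 : Q 0 = 1)
    (hQrec : ∀ n : ℕ, 1 ≤ n → Q n =
      ∑ k ∈ Finset.Icc 1 n, ∑ s ∈ Finset.Nat.antidiagonalTuple (2 * k) (n - k),
        C (genBinom k) * ∏ i, Dop (2 * (s i : ℚ) - 1) (Q (s i))) :
    ∀ n : ℕ, (Q n).IsHomogeneous (2 * n)
      ∧ (Q n).IsWeightedHomogeneous (fun k => k) (2 * n) := by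
  have main : ∀ (w : ℕ → ℕ) (e : ℕ), (∀ j, w (j + 1) = w j + e) → w 0 + e = 1 →
      ∀ n, (Q n).IsWeightedHomogeneous w (2 * n) := by
    intro w e hw h01 n
    induction n using Nat.strong_induction_on with
    | _ n ih =>
      rcases Nat.eq_zero_or_pos n with rfl | hn
      · rw [hQ0, Nat.mul_zero]; exact isWeightedHomogeneous_one ℚ w
      · rw [hQrec n hn]
        apply IsWeightedHomogeneous.sum
        intro k hk
        apply IsWeightedHomogeneous.sum
        intro s hs
        simp only [Finset.mem_Icc] at hk
        rw [Finset.Nat.mem_antidiagonalTuple] at hs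
        have : (2 * n) = 0 + ∑ i : Fin (2 * k), (2 * s i + 1) := by
          rw [Finset.sum_add_distrib, ← Finset.mul_sum, hs]
          simp [Finset.card_univ]
          omega
        rw [this]
        apply (isWeightedHomogeneous_C w _).mul
        apply IsWeightedHomogeneous.prod
        intro i _
        have hsi : s i < n := by
          have : s i ≤ n - k := hs ▸ Finset.single_le_sum (f := fun i => s i)
            (fun _ _ => Nat.zero_le _) (Finset.mem_univ i)
          omega
        exact Dop_homog w e hw h01 (ih (s i) hsi) _
  intro n
  exact ⟨main 1 0 (fun _ => rfl) rfl n, main (fun k => k) 1 (fun _ => rfl) rfl n⟩
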